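/- Given a sequential vset-automaton A with n states and m transitions and a set X ⊆ Vars(A), there exists a sequential vset-automaton A′ that is equivalent to A (i.e., ⟦A′⟧(d) = ⟦A⟧(d) for every document d), is semi-functional for X, and has at most 2^{|X|}·n states and at most 2^{|X|}·m transitions. -/

import Mathlib

namespace Spanners

open scoped Classical

/-! ### Spans and mappings -/

abbrev Span := ℕ × ℕ

abbrev VMapping := ℕ → Option Span

def emptyMapping : VMapping := fun _ => none

def mapDom (μ : VMapping) : Set ℕ := {x | μ x ≠ none}

/-- Two mappings are compatible if they agree on every common variable. -/
def Compatible (μ1 μ2 : VMapping) : Prop :=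
  ∀ x s1 s2, μ1 x = some s1 → μ2 x = some s2 → s1 = s2

def DisjointDom (μ1 μ2 : VMapping) : Prop :=
  ∀ x, μ1 x = none ∨ μ2 x = none

def munion (μ1 μ2 : VMapping) : VMapping := fun x =>
  match μ1 x with
  | some s => some s
  | none => μ2 x

def minsert (x : ℕ) (s : Span) (μ : VMapping) : VMapping :=
  fun y => if y = x then some s else μ y

/-- Natural join of two sets of mappings. -/
def joinSet (S1 S2 : Set VMapping) : Set VMapping :=
  {μ | ∃ μ1 ∈ S1, ∃ μ2 ∈ S2, Compatible μ1 μ2 ∧ μ = munion μ1 μ2}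

/-- Difference of two sets of mappings. -/
def diffSet (S1 S2 : Set VMapping) : Set VMapping :=
  {μ1 | μ1 ∈ S1 ∧ ∀ μ2 ∈ S2, ¬ Compatible μ1 μ2}

/-- Restriction of a mapping to a set of variables. -/
noncomputable def restrictMap (μ : VMapping) (V : Set ℕ) : VMapping :=
  fun x => if x ∈ V then μ x else none

/-- Projection of a set of mappings to a set of variables. -/
def projSet (V : Set ℕ) (S : Set VMapping) : Set VMapping :=
  {μ' | ∃ μ ∈ S, μ' = restrictMap μ V}

/-! ### Regex formulas -/

inductive RGX (Sig : Type) where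
  | empty : RGX Sig
  | eps : RGX Sig
  | letter : Sig → RGX Sig
  | union : RGX Sig → RGX Sig → RGX Sig
  | concat : RGX Sig → RGX Sig → RGX Sig
  | star : RGX Sig → RGX Sig
  | bind : ℕ → RGX Sig → RGX Sig

variable {Sig : Type}

def RGX.vars : RGX Sig → Finset ℕ
  | .empty => ∅
  | .eps => ∅
  | .letter _ => ∅
  | .union a b => a.vars ∪ b.vars
  | .concat a b => a.vars ∪ b.vars
  | .star a => a.vars
  | .bind x a => insert x a.vars

def RGX.size : RGX Sig → ℕ
  | .empty => 1
  | .eps => 1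
  | .letter _ => 1
  | .union a b => a.size + b.size + 1
  | .concat a b => a.size + b.size + 1
  | .star a => a.size + 1
  | .bind _ a => a.size + 1

/-- The schemaless semantics `⟨α⟩(d)`: `RMatch α d i j μ` means `([i,j⟩, μ) ∈ ⟨α⟩(d)`. -/
inductive RMatch : RGX Sig → List Sig → ℕ → ℕ → VMapping → Prop where
  | eps {d : List Sig} {i : ℕ} (h1 : 1 ≤ i) (h2 : i ≤ d.length + 1) :
      RMatch .eps d i i emptyMapping
  | letter {d : List Sig} {i : ℕ} {σ : Sig} (h1 : 1 ≤ i) (h2 : d[i - 1]? = some σ) :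
      RMatch (.letter σ) d i (i + 1) emptyMapping
  | unionL {a b : RGX Sig} {d : List Sig} {i j : ℕ} {μ : VMapping}
      (h : RMatch a d i j μ) : RMatch (.union a b) d i j μ
  | unionR {a b : RGX Sig} {d : List Sig} {i j : ℕ} {μ : VMapping}
      (h : RMatch b d i j μ) : RMatch (.union a b) d i j μ
  | concat {a b : RGX Sig} {d : List Sig} {i k j : ℕ} {μ1 μ2 : VMapping}
      (h1 : RMatch a d i k μ1) (h2 : RMatch b d k j μ2) (hd : DisjointDom μ1 μ2) :
      RMatch (.concat a b) d i j (munion μ1 μ2)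
  | bind {x : ℕ} {a : RGX Sig} {d : List Sig} {i j : ℕ} {μ : VMapping}
      (h : RMatch a d i j μ) (hx : μ x = none) :
      RMatch (.bind x a) d i j (minsert x (i, j) μ)
  | starNil {a : RGX Sig} {d : List Sig} {i : ℕ} (h1 : 1 ≤ i) (h2 : i ≤ d.length + 1) :
      RMatch (.star a) d i i emptyMapping
  | starCons {a : RGX Sig} {d : List Sig} {i k j : ℕ} {μ1 μ2 : VMapping}
      (h1 : RMatch a d i k μ1) (h2 : RMatch (.star a) d k j μ2) (hd : DisjointDom μ1 μ2) :
      RMatch (.star a) d i j (munion μ1 μ2)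

/-- `⟦α⟧(d)`: mappings extracted with the full span. -/
def rgxSem (α : RGX Sig) (d : List Sig) : Set VMapping :=
  {μ | RMatch α d 1 (d.length + 1) μ}

/-- Sequential regex formulas. -/
def RGX.Sequential : RGX Sig → Prop
  | .empty => True
  | .eps => True
  | .letter _ => True
  | .union a b => a.Sequential ∧ b.Sequential
  | .concat a b => a.Sequential ∧ b.Sequential ∧ Disjoint a.vars b.vars
  | .star a => a.Sequential ∧ a.vars = ∅
  | .bind x a => a.Sequential ∧ x ∉ a.vars

/-- Variable-free words over the alphabet (built from ε, letters and concatenation). -/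
inductive RGX.IsWord : RGX Sig → Prop where
  | eps : RGX.IsWord .eps
  | letter (σ : Sig) : RGX.IsWord (.letter σ)
  | concat {a b : RGX Sig} : a.IsWord → b.IsWord → RGX.IsWord (.concat a b)

/-- Functional for a set `V` of variables. -/
inductive FunctionalFor : RGX Sig → Finset ℕ → Prop where
  | word {α : RGX Sig} (h : α.IsWord) : FunctionalFor α ∅
  | union {a b : RGX Sig} {V : Finset ℕ} (ha : FunctionalFor a V) (hb : FunctionalFor b V) :
      FunctionalFor (.union a b) V
  | concat {a b : RGX Sig} {V : Finset ℕ} (V1 : Finset ℕ) (hsub : V1 ⊆ V)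
      (ha : FunctionalFor a V1) (hb : FunctionalFor b (V \ V1)) :
      FunctionalFor (.concat a b) V
  | star {a : RGX Sig} (h : FunctionalFor a ∅) : FunctionalFor (.star a) ∅
  | bind {x : ℕ} {a : RGX Sig} {V : Finset ℕ} (h : FunctionalFor a (V.erase x)) :
      FunctionalFor (.bind x a) V

def RGX.Functional (α : RGX Sig) : Prop := FunctionalFor α α.vars

/-- Disjunctive functional regex formulas: finite disjunctions of functional regex formulas. -/
inductive DisjFunctional : RGX Sig → Prop where
  | base {γ : RGX Sig} (h : γ.Functional) : DisjFunctional γ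
  | union {a b : RGX Sig} (ha : DisjFunctional a) (hb : DisjFunctional b) :
      DisjFunctional (.union a b)

/-- Number of disjuncts of a (disjunctive) regex formula. -/
def countDisjuncts : RGX Sig → ℕ
  | .union a b => countDisjuncts a + countDisjuncts b
  | _ => 1

/-- Disjunction-free regex formulas. -/
def RGX.DisjFree : RGX Sig → Prop
  | .union _ _ => False
  | .concat a b => a.DisjFree ∧ b.DisjFree
  | .star a => a.DisjFree
  | .bind _ a => a.DisjFree
  | _ => True

/-- `γ` is synchronized for `x`: no subformula `γ1 ∨ γ2` contains `x`. -/
def RGX.SyncFor : RGX Sig → ℕ → Prop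
  | .union a b, x => (x ∉ a.vars ∧ x ∉ b.vars) ∧ a.SyncFor x ∧ b.SyncFor x
  | .concat a b, x => a.SyncFor x ∧ b.SyncFor x
  | .star a, x => a.SyncFor x
  | .bind _ a, x => a.SyncFor x
  | _, _ => True

/-- Concatenation of a list of regex formulas. -/
def concatList : List (RGX Sig) → RGX Sig
  | [] => .eps
  | [α] => α
  | α :: rest => .concat α (concatList rest)

/-- Disjunction of a list of regex formulas. -/
def disjList : List (RGX Sig) → RGX Sig
  | [] => .empty
  | [α] => α
  | α :: rest => .union α (disjList rest)

/-! ### vset-automata -/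

inductive VLabel (Sig : Type) where
  | eps : VLabel Sig
  | letter : Sig → VLabel Sig
  | openv : ℕ → VLabel Sig
  | closev : ℕ → VLabel Sig
deriving DecidableEq

structure VA (Sig : Type) [DecidableEq Sig] where
  q0 : ℕ
  F : Finset ℕ
  δ : Finset (ℕ × VLabel Sig × ℕ)

variable [DecidableEq Sig]

/-- The states of a VA: the initial state and all states mentioned in `F` or in transitions. -/
def statesOf (A : VA Sig) : Finset ℕ :=
  insert A.q0 (A.F ∪ A.δ.image (fun t => t.1) ∪ A.δ.image (fun t => t.2.2))

def labelVars : VLabel Sig → Finset ℕ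
  | .openv x => {x}
  | .closev x => {x}
  | _ => ∅

/-- `Vars(A)`: the variables mentioned in the transitions of `A`. -/
def varsOf (A : VA Sig) : Finset ℕ := A.δ.biUnion (fun t => labelVars t.2.1)

/-- Total size of a VA: number of states plus number of transitions. -/
def vaSize (A : VA Sig) : ℕ := (statesOf A).card + A.δ.card

/-- `A.PathFrom p ls q`: a path (run segment) from `p` to `q` with label sequence `ls`. -/
inductive VA.PathFrom (A : VA Sig) : ℕ → List (VLabel Sig) → ℕ → Prop where
  | nil (q : ℕ) : VA.PathFrom A q [] q
  | cons {p q r : ℕ} {l : VLabel Sig} {ls : List (VLabel Sig)}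
      (h : (p, l, q) ∈ A.δ) (htail : VA.PathFrom A q ls r) : VA.PathFrom A p (l :: ls) r

/-- The word (document) read by a sequence of labels. -/
def readWord : List (VLabel Sig) → List Sig :=
  List.filterMap fun l => match l with
    | VLabel.letter σ => some σ
    | _ => none

def isLetterL : VLabel Sig → Bool
  | .letter _ => true
  | _ => false

/-- The current position in the document just before executing the `k`-th label. -/
def posAt (ls : List (VLabel Sig)) (k : ℕ) : ℕ := 1 + (ls.take k).countP isLetterL

/-- Validity of a run, given by its label sequence. -/
def ValidLabels (ls : List (VLabel Sig)) : Prop :=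
  ∀ x : ℕ,
    ls.count (VLabel.openv x) ≤ 1 ∧
    ls.count (VLabel.closev x) ≤ 1 ∧
    ((VLabel.openv x) ∈ ls ↔ (VLabel.closev x) ∈ ls) ∧
    ∀ i j : ℕ, ls[i]? = some (VLabel.openv x) → ls[j]? = some (VLabel.closev x) →
      posAt ls i ≤ posAt ls j

/-- The mapping `μ_ρ` extracted from a (valid accepting) run with label sequence `ls`. -/
def runMapping (ls : List (VLabel Sig)) : VMapping := fun x =>
  if (VLabel.openv x) ∈ ls then
    some (posAt ls (ls.idxOf (VLabel.openv x)), posAt ls (ls.idxOf (VLabel.closev x)))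
  else none

/-- `ls` is the label sequence of an accepting run of `A`. -/
def AcceptsWith (A : VA Sig) (ls : List (VLabel Sig)) : Prop :=
  ∃ qf, VA.PathFrom A A.q0 ls qf ∧ qf ∈ A.F

/-- `⟦A⟧(d)`. -/
def vaSem (A : VA Sig) (d : List Sig) : Set VMapping :=
  {μ | ∃ ls, AcceptsWith A ls ∧ readWord ls = d ∧ ValidLabels ls ∧ μ = runMapping ls}

/-- A VA is sequential if all of its accepting runs are valid. -/
def VA.Sequential (A : VA Sig) : Prop := ∀ ls, AcceptsWith A ls → ValidLabels ls

/-- A run from the initial state to `q` that is a prefix of an accepting run. -/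
def PrefixRun (A : VA Sig) (ls : List (VLabel Sig)) (q : ℕ) : Prop :=
  VA.PathFrom A A.q0 ls q ∧ ∃ ls' qf, VA.PathFrom A q ls' qf ∧ qf ∈ A.F

/-- `A` is semi-functional for the variable `x`: no state has extended configuration `d`. -/
def SemiFunctionalFor (A : VA Sig) (x : ℕ) : Prop :=
  ¬ ∃ q ls1 ls2, PrefixRun A ls1 q ∧ PrefixRun A ls2 q ∧
      (VLabel.closev x) ∈ ls1 ∧ (VLabel.openv x) ∉ ls2

def SemiFunctionalForSet (A : VA Sig) (X : Finset ℕ) : Prop :=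
  ∀ x ∈ X, SemiFunctionalFor A x

/-- Functional VA: sequential, and every accepting run opens and closes every variable. -/
def FunctionalVA (A : VA Sig) : Prop :=
  A.Sequential ∧ ∀ ls, AcceptsWith A ls → ∀ x ∈ varsOf A,
    (VLabel.openv x) ∈ ls ∧ (VLabel.closev x) ∈ ls

/-- `l` has a unique target state in `A`. -/
def UniqueTarget (A : VA Sig) (l : VLabel Sig) : Prop :=
  ∃ qt : ℕ, ∀ p q : ℕ, (p, l, q) ∈ A.δ → q = qt

/-- `A` is synchronized for the variable `x`. -/
def SyncForVA (A : VA Sig) (x : ℕ) : Prop :=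
  UniqueTarget A (VLabel.openv x) ∧ UniqueTarget A (VLabel.closev x) ∧
    ((∀ ls, AcceptsWith A ls → (VLabel.openv x) ∈ ls ∧ (VLabel.closev x) ∈ ls) ∨
     (∀ ls, AcceptsWith A ls → (VLabel.openv x) ∉ ls ∧ (VLabel.closev x) ∉ ls))

/-- `A` is the disjunctive functional VA with functional components `parts`. -/
def DisjFunctionalVAWith (A : VA Sig) (parts : List (VA Sig)) : Prop :=
  (∀ B ∈ parts, FunctionalVA B) ∧
  (parts.Pairwise fun B C => Disjoint (statesOf B) (statesOf C)) ∧
  (∀ B ∈ parts, A.q0 ∉ statesOf B) ∧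
  A.F = parts.foldr (fun B s => B.F ∪ s) (∅ : Finset ℕ) ∧
  A.δ = (parts.map (fun B => (A.q0, (VLabel.eps : VLabel Sig), B.q0))).toFinset
        ∪ parts.foldr (fun B s => B.δ ∪ s) (∅ : Finset (ℕ × VLabel Sig × ℕ))

def DisjFunctionalVA (A : VA Sig) : Prop := ∃ parts, DisjFunctionalVAWith A parts

/-! ### 3CNF formulas -/

/-- A 3CNF clause over `n` Boolean variables: a triple of literals; `(i, true)` is `xᵢ`,
`(i, false)` is `¬xᵢ`. -/
def Clause3 (n : ℕ) : Type := (Fin n × Bool) × (Fin n × Bool) × (Fin n × Bool)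

def litsOf {n : ℕ} (c : Clause3 n) : List (Fin n × Bool) := [c.1, c.2.1, c.2.2]

def clauseSat {n : ℕ} (τ : Fin n → Bool) (c : Clause3 n) : Prop :=
  ∃ l ∈ litsOf c, τ l.1 = l.2

def Sat3 {n m : ℕ} (φ : Fin m → Clause3 n) : Prop :=
  ∃ τ : Fin n → Bool, ∀ j, clauseSat τ (φ j)

end Spanners

namespace Spanners

variable {Sig : Type} [DecidableEq Sig]

set_option linter.unusedSectionVars false

section ListHelpers

variable {α : Type*} [DecidableEq α]

lemma mem_of_getElem?' {ls : List α} {n : ℕ} {a : α} (h : ls[n]? = some a) : a ∈ ls :=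
  List.mem_iff_getElem?.mpr ⟨n, h⟩

lemma count_le_one_iff (ls : List α) (a : α) :
    ls.count a ≤ 1 ↔ ∀ i j : ℕ, ls[i]? = some a → ls[j]? = some a → i = j := by
  induction ls with
  | nil => simp
  | cons l t ih =>
    by_cases hla : l = a
    · subst hla
      rw [List.count_cons_self]
      constructor
      · intro h i j hi hj
        have ht : l ∉ t := by
          rw [← List.count_eq_zero]; omega
        have hz : ∀ k : ℕ, (l :: t)[k]? = some l → k = 0 := by
          intro k hk
          cases k with
          | zero => rfl
          | succ k' =>
            rw [List.getElem?_cons_succ] at hk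
            exact absurd (mem_of_getElem?' hk) ht
        rw [hz i hi, hz j hj]
      · intro h
        have ht : l ∉ t := by
          intro hmem
          obtain ⟨n, hn⟩ := List.mem_iff_getElem?.mp hmem
          have := h 0 (n + 1) (by simp) (by simpa using hn)
          omega
        rw [List.count_eq_zero.mpr ht]
    · rw [List.count_cons_of_ne (by simpa using fun h => hla h) ]
      rw [ih]
      constructor
      · intro h i j hi hj
        cases i with
        | zero => simp at hi; exact absurd hi hla
        | succ i' =>
          cases j with
          | zero => simp at hj; exact absurd hj hla
          | succ j' =>
            rw [List.getElem?_cons_succ] at hi hj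
            rw [h i' j' hi hj]
      · intro h i j hi hj
        have := h (i + 1) (j + 1) (by simpa using hi) (by simpa using hj)
        omega

lemma getElem?_ne_of_lt_indexOf {a : α} {ls : List α} {k : ℕ}
    (h : k < ls.idxOf a) : ls[k]? ≠ some a := by
  induction ls generalizing k with
  | nil => simp at h
  | cons l t ih =>
    by_cases hla : l = a
    · subst hla; rw [List.idxOf_cons_self] at h; omega
    · rw [List.idxOf_cons_ne _ hla] at h
      cases k with
      | zero => simpa using fun h' => hla h'
      | succ k' =>
        rw [List.getElem?_cons_succ]
        exact ih (by omega)

lemma getElem?_indexOf' {a : α} {ls : List α} (h : a ∈ ls) :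
    ls[ls.idxOf a]? = some a := by
  have hlt := List.idxOf_lt_length_iff.mpr h
  rw [List.getElem?_eq_some_iff]
  exact ⟨hlt, List.getElem_idxOf hlt⟩

lemma indexOf_eq_of_unique {a : α} {ls : List α} {n : ℕ}
    (hn : ls[n]? = some a) (hmin : ∀ k, k < n → ls[k]? ≠ some a) :
    ls.idxOf a = n := by
  have hmem : a ∈ ls := mem_of_getElem?' hn
  have h1 : ¬ (n < ls.idxOf a) := fun h => getElem?_ne_of_lt_indexOf h hn
  have h2 : ¬ (ls.idxOf a < n) := fun h => hmin _ h (getElem?_indexOf' hmem)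
  omega

lemma mem_take_iff {l : α} {ls : List α} {k : ℕ} :
    l ∈ ls.take k ↔ ∃ m, m < k ∧ ls[m]? = some l := by
  rw [List.mem_iff_getElem?]
  constructor
  · rintro ⟨m, hm⟩
    rw [List.getElem?_take] at hm
    by_cases h : m < k
    · rw [if_pos h] at hm; exact ⟨m, h, hm⟩
    · rw [if_neg h] at hm; exact absurd hm (by simp)
  · rintro ⟨m, hm, hv⟩
    exact ⟨m, by rw [List.getElem?_take, if_pos hm]; exact hv⟩

end ListHelpers


section Construction

variable {Sig : Type} [DecidableEq Sig]

/-- Encoding of a pair (state, subset) as a single state. -/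
def enc (q : ℕ) (S : Finset ℕ) : ℕ := Nat.pair q (Encodable.encode S)

lemma enc_inj {q q' : ℕ} {S S' : Finset ℕ} (h : enc q S = enc q' S') : q = q' ∧ S = S' := by
  unfold enc at h
  rw [Nat.pair_eq_pair] at h
  exact ⟨h.1, Encodable.encode_injective h.2⟩

/-- Relabeling: for variables in `X`, the first touched label becomes an open and
the second a close, as recorded by `S`. -/
def relabel (X S : Finset ℕ) : VLabel Sig → VLabel Sig
  | .openv x => if x ∈ X then (if x ∈ S then .closev x else .openv x) else .openv x
  | .closev x => if x ∈ X then (if x ∈ S then .closev x else .openv x) else .closev x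
  | l => l

/-- Update of the set of touched variables. -/
def upd (X : Finset ℕ) (l : VLabel Sig) (S : Finset ℕ) : Finset ℕ :=
  match l with
  | .openv x => if x ∈ X then insert x S else S
  | .closev x => if x ∈ X then insert x S else S
  | _ => S

def tr (X : Finset ℕ) : List (VLabel Sig) → Finset ℕ → List (VLabel Sig)
  | [], _ => []
  | l :: ls, S => relabel X S l :: tr X ls (upd X l S)

def finUpd (X : Finset ℕ) : List (VLabel Sig) → Finset ℕ → Finset ℕ
  | [], S => S
  | l :: ls, S => finUpd X ls (upd X l S)

/-- The product construction. -/
def prodVA (A : VA Sig) (X : Finset ℕ) : VA Sig where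
  q0 := enc A.q0 ∅
  F := (A.F ×ˢ X.powerset).image (fun p => enc p.1 p.2)
  δ := (A.δ ×ˢ X.powerset).image (fun p =>
        (enc p.1.1 p.2, relabel X p.2 p.1.2.1, enc p.1.2.2 (upd X p.1.2.1 p.2)))

lemma upd_subset {X S : Finset ℕ} (l : VLabel Sig) (h : S ⊆ X) : upd X l S ⊆ X := by
  cases l <;> simp only [upd] <;> try exact h
  all_goals split_ifs with hx
  · exact Finset.insert_subset hx h
  · exact h
  · exact Finset.insert_subset hx h
  · exact h

lemma finUpd_subset {X : Finset ℕ} (ls : List (VLabel Sig)) {S : Finset ℕ} (h : S ⊆ X) :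
    finUpd X ls S ⊆ X := by
  induction ls generalizing S with
  | nil => exact h
  | cons l t ih => exact ih (upd_subset l h)

lemma mem_prod_delta {A : VA Sig} {X : Finset ℕ} {t : ℕ × VLabel Sig × ℕ} :
    t ∈ (prodVA A X).δ ↔ ∃ u ∈ A.δ, ∃ S ⊆ X,
      t = (enc u.1 S, relabel X S u.2.1, enc u.2.2 (upd X u.2.1 S)) := by
  simp only [prodVA, Finset.mem_image, Finset.mem_product, Finset.mem_powerset]
  constructor
  · rintro ⟨⟨u, S⟩, ⟨hu, hS⟩, rfl⟩
    exact ⟨u, hu, S, hS, rfl⟩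
  · rintro ⟨u, hu, S, hS, rfl⟩
    exact ⟨(u, S), ⟨hu, hS⟩, rfl⟩

lemma path_tr {A : VA Sig} {X : Finset ℕ} {p q : ℕ} {ls : List (VLabel Sig)}
    (h : VA.PathFrom A p ls q) :
    ∀ S ⊆ X, VA.PathFrom (prodVA A X) (enc p S) (tr X ls S) (enc q (finUpd X ls S)) := by
  induction h with
  | nil q => intro S hS; exact VA.PathFrom.nil _
  | @cons p q r l ls hmem htail ih =>
    intro S hS
    refine VA.PathFrom.cons ?_ (ih (upd X l S) (upd_subset l hS))
    exact mem_prod_delta.mpr ⟨(p, l, q), hmem, S, hS, rfl⟩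

lemma path_tr_inv {A : VA Sig} {X : Finset ℕ} {P Q : ℕ} {LS : List (VLabel Sig)}
    (h : VA.PathFrom (prodVA A X) P LS Q) :
    ∀ p S, P = enc p S → S ⊆ X →
      ∃ ls q, VA.PathFrom A p ls q ∧ LS = tr X ls S ∧ Q = enc q (finUpd X ls S) := by
  induction h with
  | nil q =>
    intro p S hP hS
    exact ⟨[], p, VA.PathFrom.nil _, rfl, hP⟩
  | @cons P Q1 R L LS hmem htail ih =>
    intro p S hP hS
    subst hP
    obtain ⟨u, hu, S', hS', heq⟩ := mem_prod_delta.mp hmem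
    simp only [Prod.mk.injEq] at heq
    obtain ⟨h1, h2, h3⟩ := heq
    obtain ⟨hp, hSS⟩ := enc_inj h1
    subst hSS
    obtain ⟨ls, q, hpath, hls, hQ⟩ := ih u.2.2 (upd X u.2.1 S) h3 (upd_subset _ hS')
    refine ⟨u.2.1 :: ls, q, VA.PathFrom.cons ?_ hpath, ?_, hQ⟩
    · rw [hp]; exact (by simpa using hu)
    · simp [tr, hls, h2]

end Construction

section TrLemmas

variable {Sig : Type} [DecidableEq Sig]

lemma tr_getElem? (X : Finset ℕ) (ls : List (VLabel Sig)) (S : Finset ℕ) (k : ℕ) :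
    (tr X ls S)[k]? = (ls[k]?).map (relabel X (finUpd X (ls.take k) S)) := by
  induction ls generalizing S k with
  | nil => simp [tr]
  | cons l t ih =>
    cases k with
    | zero => simp [tr, finUpd]
    | succ k' =>
      simp only [tr, List.getElem?_cons_succ, List.take_succ_cons, finUpd]
      exact ih (upd X l S) k'

lemma tr_take (X : Finset ℕ) (ls : List (VLabel Sig)) (S : Finset ℕ) (k : ℕ) :
    (tr X ls S).take k = tr X (ls.take k) S := by
  induction ls generalizing S k with
  | nil => simp [tr]
  | cons l t ih =>
    cases k with
    | zero => simp [tr]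
    | succ k' => simp [tr, ih]

lemma isLetterL_relabel (X S : Finset ℕ) (l : VLabel Sig) :
    isLetterL (relabel X S l) = isLetterL l := by
  cases l <;> simp [relabel, isLetterL] <;> split_ifs <;> simp [isLetterL]

lemma countP_tr (X : Finset ℕ) (ls : List (VLabel Sig)) (S : Finset ℕ) :
    (tr X ls S).countP isLetterL = ls.countP isLetterL := by
  induction ls generalizing S with
  | nil => simp [tr]
  | cons l t ih =>
    simp only [tr, List.countP_cons, ih, isLetterL_relabel]

lemma posAt_tr (X : Finset ℕ) (ls : List (VLabel Sig)) (S : Finset ℕ) (k : ℕ) :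
    posAt (tr X ls S) k = posAt ls k := by
  unfold posAt
  rw [tr_take, countP_tr]

lemma posAt_mono (ls : List (VLabel Sig)) {a b : ℕ} (h : a ≤ b) :
    posAt ls a ≤ posAt ls b := by
  unfold posAt
  have : ls.take a = (ls.take b).take a := by rw [List.take_take, Nat.min_eq_left h]
  rw [this]
  exact Nat.add_le_add_left ((List.take_sublist a (ls.take b)).countP_le) 1

lemma readWord_tr (X : Finset ℕ) (ls : List (VLabel Sig)) (S : Finset ℕ) :
    readWord (tr X ls S) = readWord ls := by
  induction ls generalizing S with
  | nil => simp [tr]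
  | cons l t ih =>
    have hih := ih (upd X l S)
    cases l with
    | eps => simpa [tr, readWord, relabel] using hih
    | letter σ => simpa [tr, readWord, relabel] using hih
    | openv x =>
      simp only [tr, readWord, List.filterMap_cons, relabel] at hih ⊢
      split_ifs <;> simpa using hih
    | closev x =>
      simp only [tr, readWord, List.filterMap_cons, relabel] at hih ⊢
      split_ifs <;> simpa using hih

/-- Characterization of labels of `tr` for variables in `X`. -/
lemma relabel_eq_openv {X S : Finset ℕ} {x : ℕ} (hx : x ∈ X) (l : VLabel Sig) :
    relabel X S l = VLabel.openv x ↔ (l = VLabel.openv x ∨ l = VLabel.closev x) ∧ x ∉ S := by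
  cases l with
  | openv y =>
    simp only [relabel]
    split_ifs with h1 h2 <;> simp_all <;> rintro rfl <;> simp_all
  | closev y =>
    simp only [relabel]
    split_ifs with h1 h2 <;> simp_all <;> rintro rfl <;> simp_all
  | eps => simp [relabel]
  | letter σ => simp [relabel]

lemma relabel_eq_closev {X S : Finset ℕ} {x : ℕ} (hx : x ∈ X) (l : VLabel Sig) :
    relabel X S l = VLabel.closev x ↔ (l = VLabel.openv x ∨ l = VLabel.closev x) ∧ x ∈ S := by
  cases l with
  | openv y =>
    simp only [relabel]
    split_ifs with h1 h2 <;> simp_all <;> rintro rfl <;> simp_all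
  | closev y =>
    simp only [relabel]
    split_ifs with h1 h2 <;> simp_all <;> rintro rfl <;> simp_all
  | eps => simp [relabel]
  | letter σ => simp [relabel]

lemma relabel_eq_openv_of_not_mem {X S : Finset ℕ} {x : ℕ} (hx : x ∉ X) (l : VLabel Sig) :
    relabel X S l = VLabel.openv x ↔ l = VLabel.openv x := by
  cases l with
  | openv y =>
    simp only [relabel]; split_ifs with h1 h2 <;> simp_all <;> rintro rfl <;> simp_all
  | closev y =>
    simp only [relabel]; split_ifs with h1 h2 <;> simp_all <;> rintro rfl <;> simp_all
  | eps => simp [relabel]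
  | letter σ => simp [relabel]

lemma relabel_eq_closev_of_not_mem {X S : Finset ℕ} {x : ℕ} (hx : x ∉ X) (l : VLabel Sig) :
    relabel X S l = VLabel.closev x ↔ l = VLabel.closev x := by
  cases l with
  | openv y =>
    simp only [relabel]; split_ifs with h1 h2 <;> simp_all <;> rintro rfl <;> simp_all
  | closev y =>
    simp only [relabel]; split_ifs with h1 h2 <;> simp_all <;> rintro rfl <;> simp_all
  | eps => simp [relabel]
  | letter σ => simp [relabel]

lemma mem_upd_iff {X S : Finset ℕ} {x : ℕ} (hx : x ∈ X) (l : VLabel Sig) :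
    x ∈ upd X l S ↔ x ∈ S ∨ l = VLabel.openv x ∨ l = VLabel.closev x := by
  cases l with
  | openv y =>
    simp only [upd]
    split_ifs with h1
    · by_cases hxy : y = x <;> simp_all [Finset.mem_insert] <;> tauto
    · by_cases hxy : y = x <;> simp_all <;> tauto
  | closev y =>
    simp only [upd]
    split_ifs with h1
    · by_cases hxy : y = x <;> simp_all [Finset.mem_insert] <;> tauto
    · by_cases hxy : y = x <;> simp_all <;> tauto
  | eps => simp [upd]
  | letter σ => simp [upd]

lemma mem_finUpd_iff {X : Finset ℕ} {x : ℕ} (hx : x ∈ X) (ls : List (VLabel Sig)) (S : Finset ℕ) :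
    x ∈ finUpd X ls S ↔ x ∈ S ∨ VLabel.openv x ∈ ls ∨ (VLabel.closev x : VLabel Sig) ∈ ls := by
  induction ls generalizing S with
  | nil => simp [finUpd]
  | cons l t ih =>
    simp only [finUpd, ih, mem_upd_iff hx, List.mem_cons]
    tauto

end TrLemmas

section MainLemma

variable {Sig : Type} [DecidableEq Sig]

lemma finUpd_take_mem {X : Finset ℕ} {x : ℕ} (hx : x ∈ X) (ls : List (VLabel Sig)) (k : ℕ) :
    x ∈ finUpd X (ls.take k) ∅ ↔
      ∃ m, m < k ∧ (ls[m]? = some (VLabel.openv x) ∨ ls[m]? = some (VLabel.closev x)) := by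
  rw [mem_finUpd_iff hx]
  simp only [Finset.notMem_empty, false_or, mem_take_iff]
  constructor
  · rintro (⟨m, hm, h⟩ | ⟨m, hm, h⟩)
    · exact ⟨m, hm, Or.inl h⟩
    · exact ⟨m, hm, Or.inr h⟩
  · rintro ⟨m, hm, h | h⟩
    · exact Or.inl ⟨m, hm, h⟩
    · exact Or.inr ⟨m, hm, h⟩

lemma tr_char_openv {X : Finset ℕ} {x : ℕ} (hx : x ∈ X) (ls : List (VLabel Sig)) (k : ℕ) :
    (tr X ls ∅)[k]? = some (VLabel.openv x) ↔
      ((ls[k]? = some (VLabel.openv x) ∨ ls[k]? = some (VLabel.closev x)) ∧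
       ¬ ∃ m, m < k ∧ (ls[m]? = some (VLabel.openv x) ∨ ls[m]? = some (VLabel.closev x))) := by
  rw [tr_getElem?]
  cases hk : ls[k]? with
  | none => simp
  | some l =>
    simp only [Option.map_some, Option.some.injEq]
    rw [relabel_eq_openv hx, finUpd_take_mem hx]

lemma tr_char_closev {X : Finset ℕ} {x : ℕ} (hx : x ∈ X) (ls : List (VLabel Sig)) (k : ℕ) :
    (tr X ls ∅)[k]? = some (VLabel.closev x) ↔
      ((ls[k]? = some (VLabel.openv x) ∨ ls[k]? = some (VLabel.closev x)) ∧
       ∃ m, m < k ∧ (ls[m]? = some (VLabel.openv x) ∨ ls[m]? = some (VLabel.closev x))) := by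
  rw [tr_getElem?]
  cases hk : ls[k]? with
  | none => simp
  | some l =>
    simp only [Option.map_some, Option.some.injEq]
    rw [relabel_eq_closev hx, finUpd_take_mem hx]

lemma tr_char_openv_not {X : Finset ℕ} {x : ℕ} (hx : x ∉ X) (ls : List (VLabel Sig)) (k : ℕ) :
    (tr X ls ∅)[k]? = some (VLabel.openv x) ↔ ls[k]? = some (VLabel.openv x) := by
  rw [tr_getElem?]
  cases hk : ls[k]? with
  | none => simp
  | some l => simp [relabel_eq_openv_of_not_mem hx]

lemma tr_char_closev_not {X : Finset ℕ} {x : ℕ} (hx : x ∉ X) (ls : List (VLabel Sig)) (k : ℕ) :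
    (tr X ls ∅)[k]? = some (VLabel.closev x) ↔ ls[k]? = some (VLabel.closev x) := by
  rw [tr_getElem?]
  cases hk : ls[k]? with
  | none => simp
  | some l => simp [relabel_eq_closev_of_not_mem hx]

lemma main_x {X : Finset ℕ} {ls : List (VLabel Sig)} (hv : ValidLabels ls) (x : ℕ) :
    ((tr X ls ∅).count (VLabel.openv x) ≤ 1 ∧
     (tr X ls ∅).count (VLabel.closev x) ≤ 1 ∧
     ((VLabel.openv x : VLabel Sig) ∈ tr X ls ∅ ↔ (VLabel.closev x : VLabel Sig) ∈ tr X ls ∅) ∧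
     ∀ i j : ℕ, (tr X ls ∅)[i]? = some (VLabel.openv x) →
        (tr X ls ∅)[j]? = some (VLabel.closev x) →
        posAt (tr X ls ∅) i ≤ posAt (tr X ls ∅) j) ∧
    runMapping (tr X ls ∅) x = runMapping ls x := by
  obtain ⟨hc1, hc2, hmem, hpos⟩ := hv x
  by_cases hx : x ∈ X
  · -- x ∈ X
    by_cases ho : (VLabel.openv x : VLabel Sig) ∈ ls
    · -- both labels occur in ls
      have hcl : (VLabel.closev x : VLabel Sig) ∈ ls := hmem.mp ho
      set i := ls.idxOf (VLabel.openv x) with hidef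
      set j := ls.idxOf (VLabel.closev x) with hjdef
      have hi : ls[i]? = some (VLabel.openv x) := getElem?_indexOf' ho
      have hj : ls[j]? = some (VLabel.closev x) := getElem?_indexOf' hcl
      have uo : ∀ k, ls[k]? = some (VLabel.openv x) → k = i :=
        fun k hk => (count_le_one_iff ls _).mp hc1 k i hk hi
      have uc : ∀ k, ls[k]? = some (VLabel.closev x) → k = j :=
        fun k hk => (count_le_one_iff ls _).mp hc2 k j hk hj
      have hij : i ≠ j := by
        intro h
        rw [h, hj] at hi
        exact absurd (Option.some.inj hi) (by simp)
      set a := min i j with hadef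
      set b := max i j with hbdef
      have hab : a < b := by
        rcases Nat.lt_or_ge i j with h | h
        · simp [hadef, hbdef, Nat.min_eq_left h.le, Nat.max_eq_right h.le, h]
        · have : j < i := lt_of_le_of_ne h (Ne.symm hij)
          simp [hadef, hbdef, Nat.min_eq_right this.le, Nat.max_eq_left this.le, this]
      have hxa : ls[a]? = some (VLabel.openv x) ∨ ls[a]? = some (VLabel.closev x) := by
        rcases Nat.le_total i j with h | h
        · left; rwa [hadef, Nat.min_eq_left h]
        · right; rwa [hadef, Nat.min_eq_right h]
      have hxb : ls[b]? = some (VLabel.openv x) ∨ ls[b]? = some (VLabel.closev x) := by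
        rcases Nat.le_total i j with h | h
        · right; rwa [hbdef, Nat.max_eq_right h]
        · left; rwa [hbdef, Nat.max_eq_left h]
      have hmemk : ∀ k, (ls[k]? = some (VLabel.openv x) ∨ ls[k]? = some (VLabel.closev x)) →
          k = i ∨ k = j := by
        rintro k (h | h)
        · exact Or.inl (uo k h)
        · exact Or.inr (uc k h)
      have claimO : ∀ k, (tr X ls ∅)[k]? = some (VLabel.openv x) ↔ k = a := by
        intro k
        rw [tr_char_openv hx]
        constructor
        · rintro ⟨hk, hnone⟩
          rcases hmemk k hk with hki | hkj
          · have h1 : ¬ j < k := fun h => hnone ⟨j, h, Or.inr hj⟩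
            omega
          · have h1 : ¬ i < k := fun h => hnone ⟨i, h, Or.inl hi⟩
            omega
        · rintro rfl
          refine ⟨hxa, ?_⟩
          rintro ⟨m, hm, hml⟩
          rcases hmemk m hml with hm1 | hm1 <;> omega
      have claimC : ∀ k, (tr X ls ∅)[k]? = some (VLabel.closev x) ↔ k = b := by
        intro k
        rw [tr_char_closev hx]
        constructor
        · rintro ⟨hk, m, hm, hml⟩
          rcases hmemk k hk with hk1 | hk1 <;> rcases hmemk m hml with hm1 | hm1 <;> omega
        · rintro rfl
          exact ⟨hxb, a, hab, hxa⟩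
      have hOin : (VLabel.openv x : VLabel Sig) ∈ tr X ls ∅ :=
        mem_of_getElem?' ((claimO a).mpr rfl)
      have hCin : (VLabel.closev x : VLabel Sig) ∈ tr X ls ∅ :=
        mem_of_getElem?' ((claimC b).mpr rfl)
      have hidxO : (tr X ls ∅).idxOf (VLabel.openv x) = a :=
        indexOf_eq_of_unique ((claimO a).mpr rfl)
          (fun k hk hkk => by have := (claimO k).mp hkk; omega)
      have hidxC : (tr X ls ∅).idxOf (VLabel.closev x) = b :=
        indexOf_eq_of_unique ((claimC b).mpr rfl)
          (fun k hk hkk => by have := (claimC k).mp hkk; omega)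
      refine ⟨⟨?_, ?_, by simp [hOin, hCin], ?_⟩, ?_⟩
      · rw [count_le_one_iff]
        intro i' j' hi' hj'
        rw [(claimO i').mp hi', (claimO j').mp hj']
      · rw [count_le_one_iff]
        intro i' j' hi' hj'
        rw [(claimC i').mp hi', (claimC j').mp hj']
      · intro i' j' hi' hj'
        rw [(claimO i').mp hi', (claimC j').mp hj', posAt_tr, posAt_tr]
        exact posAt_mono ls hab.le
      · -- runMapping equality at x
        have hpij : posAt ls i ≤ posAt ls j := hpos i j hi hj
        unfold runMapping
        rw [if_pos hOin, if_pos ho, hidxO, hidxC, posAt_tr, posAt_tr]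
        rcases Nat.le_total i j with h | h
        · rw [hadef, hbdef, Nat.min_eq_left h, Nat.max_eq_right h]
        · have hpji : posAt ls j ≤ posAt ls i := posAt_mono ls h
          have heqp : posAt ls i = posAt ls j := le_antisymm hpij hpji
          rw [hadef, hbdef, Nat.min_eq_right h, Nat.max_eq_left h, heqp]
    · -- x-labels do not occur in ls
      have hcl : (VLabel.closev x : VLabel Sig) ∉ ls := fun h => ho (hmem.mpr h)
      have hnone : ∀ k : ℕ, (tr X ls ∅)[k]? ≠ some (VLabel.openv x : VLabel Sig) ∧
          (tr X ls ∅)[k]? ≠ some (VLabel.closev x : VLabel Sig) := by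
        intro k
        constructor
        · intro hk
          rcases ((tr_char_openv hx ls k).mp hk).1 with h | h
          · exact ho (mem_of_getElem?' h)
          · exact hcl (mem_of_getElem?' h)
        · intro hk
          rcases ((tr_char_closev hx ls k).mp hk).1 with h | h
          · exact ho (mem_of_getElem?' h)
          · exact hcl (mem_of_getElem?' h)
      have hOout : (VLabel.openv x : VLabel Sig) ∉ tr X ls ∅ := by
        intro h
        obtain ⟨k, hk⟩ := List.mem_iff_getElem?.mp h
        exact (hnone k).1 hk
      have hCout : (VLabel.closev x : VLabel Sig) ∉ tr X ls ∅ := by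
        intro h
        obtain ⟨k, hk⟩ := List.mem_iff_getElem?.mp h
        exact (hnone k).2 hk
      refine ⟨⟨?_, ?_, by simp [hOout, hCout], ?_⟩, ?_⟩
      · rw [count_le_one_iff]; intro i' j' hi' _; exact absurd hi' (hnone i').1
      · rw [count_le_one_iff]; intro i' j' hi' _; exact absurd hi' (hnone i').2
      · intro i' j' hi' _; exact absurd hi' (hnone i').1
      · unfold runMapping
        rw [if_neg hOout, if_neg ho]
  · -- x ∉ X
    have ho : ∀ k, (tr X ls ∅)[k]? = some (VLabel.openv x) ↔ ls[k]? = some (VLabel.openv x) :=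
      tr_char_openv_not hx ls
    have hc : ∀ k, (tr X ls ∅)[k]? = some (VLabel.closev x) ↔ ls[k]? = some (VLabel.closev x) :=
      tr_char_closev_not hx ls
    have hmo : (VLabel.openv x : VLabel Sig) ∈ tr X ls ∅ ↔ (VLabel.openv x : VLabel Sig) ∈ ls := by
      rw [List.mem_iff_getElem?, List.mem_iff_getElem?]
      exact exists_congr ho
    have hmc : (VLabel.closev x : VLabel Sig) ∈ tr X ls ∅ ↔
        (VLabel.closev x : VLabel Sig) ∈ ls := by
      rw [List.mem_iff_getElem?, List.mem_iff_getElem?]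
      exact exists_congr hc
    refine ⟨⟨?_, ?_, by rw [hmo, hmc]; exact hmem, ?_⟩, ?_⟩
    · rw [count_le_one_iff]
      intro i' j' hi' hj'
      exact (count_le_one_iff ls _).mp hc1 i' j' ((ho i').mp hi') ((ho j').mp hj')
    · rw [count_le_one_iff]
      intro i' j' hi' hj'
      exact (count_le_one_iff ls _).mp hc2 i' j' ((hc i').mp hi') ((hc j').mp hj')
    · intro i' j' hi' hj'
      rw [posAt_tr, posAt_tr]
      exact hpos i' j' ((ho i').mp hi') ((hc j').mp hj')
    · unfold runMapping
      by_cases hoin : (VLabel.openv x : VLabel Sig) ∈ ls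
      · have hcin : (VLabel.closev x : VLabel Sig) ∈ ls := hmem.mp hoin
        have hidxO : (tr X ls ∅).idxOf (VLabel.openv x) = ls.idxOf (VLabel.openv x) :=
          indexOf_eq_of_unique ((ho _).mpr (getElem?_indexOf' hoin))
            (fun k hk hkk => getElem?_ne_of_lt_indexOf hk ((ho k).mp hkk))
        have hidxC : (tr X ls ∅).idxOf (VLabel.closev x) = ls.idxOf (VLabel.closev x) :=
          indexOf_eq_of_unique ((hc _).mpr (getElem?_indexOf' hcin))
            (fun k hk hkk => getElem?_ne_of_lt_indexOf hk ((hc k).mp hkk))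
        rw [if_pos (hmo.mpr hoin), if_pos hoin, hidxO, hidxC, posAt_tr, posAt_tr]
      · rw [if_neg (fun h => hoin (hmo.mp h)), if_neg hoin]

lemma tr_valid {X : Finset ℕ} {ls : List (VLabel Sig)} (hv : ValidLabels ls) :
    ValidLabels (tr X ls ∅) :=
  fun x => (main_x hv x).1

lemma tr_runMapping {X : Finset ℕ} {ls : List (VLabel Sig)} (hv : ValidLabels ls) :
    runMapping (tr X ls ∅) = runMapping ls :=
  funext fun x => (main_x hv x).2

end MainLemma

section Final

variable {Sig : Type} [DecidableEq Sig]

lemma tr_openv_mem {X : Finset ℕ} {x : ℕ} (hx : x ∈ X) (ls : List (VLabel Sig)) :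
    ∀ S : Finset ℕ, x ∉ S →
      ((VLabel.openv x : VLabel Sig) ∈ tr X ls S ↔
        (VLabel.openv x : VLabel Sig) ∈ ls ∨ (VLabel.closev x : VLabel Sig) ∈ ls) := by
  induction ls with
  | nil => simp [tr]
  | cons l t ih =>
    intro S hS
    by_cases hl : l = VLabel.openv x ∨ l = VLabel.closev x
    · have hrel : relabel X S l = VLabel.openv x := (relabel_eq_openv hx l).mpr ⟨hl, hS⟩
      have hL : (VLabel.openv x : VLabel Sig) ∈ tr X (l :: t) S := by
        rw [show tr X (l :: t) S = relabel X S l :: tr X t (upd X l S) from rfl, hrel]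
        exact List.mem_cons_self
      refine iff_of_true hL ?_
      rcases hl with rfl | rfl
      · exact Or.inl (List.mem_cons_self)
      · exact Or.inr (List.mem_cons_self)
    · have h1 : (VLabel.openv x : VLabel Sig) ≠ relabel X S l :=
        fun h => hl ((relabel_eq_openv hx l).mp h.symm).1
      have h2 : x ∉ upd X l S := by rw [mem_upd_iff hx]; tauto
      have h3 : (VLabel.openv x : VLabel Sig) ≠ l := fun h => hl (Or.inl h.symm)
      have h4 : (VLabel.closev x : VLabel Sig) ≠ l := fun h => hl (Or.inr h.symm)
      rw [show tr X (l :: t) S = relabel X S l :: tr X t (upd X l S) from rfl]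
      simp only [List.mem_cons, ih _ h2]
      tauto

lemma tr_closev_open {X : Finset ℕ} {x : ℕ} (hx : x ∈ X) (ls : List (VLabel Sig)) :
    ∀ S : Finset ℕ, (VLabel.closev x : VLabel Sig) ∈ tr X ls S →
      x ∈ S ∨ (VLabel.openv x : VLabel Sig) ∈ tr X ls S := by
  induction ls with
  | nil => simp [tr]
  | cons l t ih =>
    intro S h
    rw [show tr X (l :: t) S = relabel X S l :: tr X t (upd X l S) from rfl] at h ⊢
    rcases List.mem_cons.mp h with h | h
    · exact Or.inl ((relabel_eq_closev hx l).mp h.symm).2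
    · rcases ih (upd X l S) h with h2 | h2
      · rw [mem_upd_iff hx] at h2
        rcases h2 with h2 | h2
        · exact Or.inl h2
        · by_cases hS : x ∈ S
          · exact Or.inl hS
          · have hrel : relabel X S l = VLabel.openv x := (relabel_eq_openv hx l).mpr ⟨h2, hS⟩
            exact Or.inr (by rw [hrel]; exact List.mem_cons_self)
      · exact Or.inr (List.mem_cons_of_mem _ h2)

lemma prod_q0 (A : VA Sig) (X : Finset ℕ) : (prodVA A X).q0 = enc A.q0 ∅ := rfl

lemma prod_semifunc (A : VA Sig) (X : Finset ℕ) : SemiFunctionalForSet (prodVA A X) X := by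
  intro x hx
  rintro ⟨q, LS1, LS2, ⟨hp1, _⟩, ⟨hp2, _⟩, hcl, hnop⟩
  obtain ⟨ls1, q1, _, rfl, hq1⟩ := path_tr_inv hp1 A.q0 ∅ (prod_q0 A X) (Finset.empty_subset X)
  obtain ⟨ls2, q2, _, rfl, hq2⟩ := path_tr_inv hp2 A.q0 ∅ (prod_q0 A X) (Finset.empty_subset X)
  have hSeq : finUpd X ls1 ∅ = finUpd X ls2 ∅ := (enc_inj (hq1.symm.trans hq2)).2
  have h1 : (VLabel.openv x : VLabel Sig) ∈ tr X ls1 ∅ := by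
    rcases tr_closev_open hx ls1 ∅ hcl with h | h
    · simp at h
    · exact h
  have h2 : (VLabel.openv x : VLabel Sig) ∈ ls1 ∨ (VLabel.closev x : VLabel Sig) ∈ ls1 :=
    (tr_openv_mem hx ls1 ∅ (Finset.notMem_empty x)).mp h1
  have h3 : x ∈ finUpd X ls2 ∅ :=
    hSeq ▸ (mem_finUpd_iff hx ls1 ∅).mpr (Or.inr h2)
  have h4 : (VLabel.openv x : VLabel Sig) ∈ ls2 ∨ (VLabel.closev x : VLabel Sig) ∈ ls2 := by
    rcases (mem_finUpd_iff hx ls2 ∅).mp h3 with h | h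
    · exact absurd h (Finset.notMem_empty x)
    · exact h
  exact hnop ((tr_openv_mem hx ls2 ∅ (Finset.notMem_empty x)).mpr h4)

lemma accepts_tr {A : VA Sig} {X : Finset ℕ} {ls : List (VLabel Sig)} (h : AcceptsWith A ls) :
    AcceptsWith (prodVA A X) (tr X ls ∅) := by
  obtain ⟨qf, hpath, hqf⟩ := h
  refine ⟨enc qf (finUpd X ls ∅), path_tr hpath ∅ (Finset.empty_subset X), ?_⟩
  simp only [prodVA, Finset.mem_image]
  exact ⟨(qf, finUpd X ls ∅),
    Finset.mem_product.mpr ⟨hqf, Finset.mem_powerset.mpr (finUpd_subset ls (Finset.empty_subset X))⟩,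
    rfl⟩

lemma accepts_tr_inv {A : VA Sig} {X : Finset ℕ} {LS : List (VLabel Sig)}
    (h : AcceptsWith (prodVA A X) LS) :
    ∃ ls, AcceptsWith A ls ∧ LS = tr X ls ∅ := by
  obtain ⟨Qf, hpath, hQf⟩ := h
  obtain ⟨ls, q, hp, rfl, hQ⟩ := path_tr_inv hpath A.q0 ∅ (prod_q0 A X) (Finset.empty_subset X)
  refine ⟨ls, ⟨q, hp, ?_⟩, rfl⟩
  subst hQ
  simp only [prodVA, Finset.mem_image] at hQf
  obtain ⟨⟨qf, S⟩, hmem, heq⟩ := hQf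
  obtain ⟨h1, h2⟩ := enc_inj heq
  rw [← h1]
  exact (Finset.mem_product.mp hmem).1

lemma prod_sem (A : VA Sig) (X : Finset ℕ) (hseq : A.Sequential) (d : List Sig) :
    vaSem (prodVA A X) d = vaSem A d := by
  ext μ
  constructor
  · rintro ⟨LS, hacc, hread, hvalid, rfl⟩
    obtain ⟨ls, haccA, rfl⟩ := accepts_tr_inv hacc
    have hvls : ValidLabels ls := hseq ls haccA
    exact ⟨ls, haccA, by rwa [readWord_tr] at hread, hvls, tr_runMapping hvls⟩
  · rintro ⟨ls, hacc, hread, hvalid, rfl⟩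
    exact ⟨tr X ls ∅, accepts_tr hacc, by rwa [readWord_tr], tr_valid hvalid,
      (tr_runMapping hvalid).symm⟩

lemma prod_seq (A : VA Sig) (X : Finset ℕ) (hseq : A.Sequential) : (prodVA A X).Sequential := by
  intro LS hacc
  obtain ⟨ls, haccA, rfl⟩ := accepts_tr_inv hacc
  exact tr_valid (hseq ls haccA)

lemma prod_states_card (A : VA Sig) (X : Finset ℕ) :
    (statesOf (prodVA A X)).card ≤ 2 ^ X.card * (statesOf A).card := by
  have hsub : statesOf (prodVA A X) ⊆
      (statesOf A ×ˢ X.powerset).image (fun p => enc p.1 p.2) := by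
    intro s hs
    simp only [statesOf, Finset.mem_insert, Finset.mem_union, Finset.mem_image] at hs
    have hgoal : ∀ q S, q ∈ statesOf A → S ⊆ X →
        enc q S ∈ (statesOf A ×ˢ X.powerset).image (fun p => enc p.1 p.2) := by
      intro q S hq hS
      exact Finset.mem_image.mpr ⟨(q, S),
        Finset.mem_product.mpr ⟨hq, Finset.mem_powerset.mpr hS⟩, rfl⟩
    have hq0 : A.q0 ∈ statesOf A := Finset.mem_insert_self _ _
    rcases hs with rfl | (hF | ⟨t, ht, rfl⟩) | ⟨t, ht, rfl⟩
    · exact hgoal _ _ hq0 (Finset.empty_subset X)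
    · simp only [prodVA, Finset.mem_image] at hF
      obtain ⟨⟨qf, S⟩, hmem, rfl⟩ := hF
      obtain ⟨h1, h2⟩ := Finset.mem_product.mp hmem
      exact hgoal _ _ (Finset.mem_insert_of_mem (Finset.mem_union_left _
        (Finset.mem_union_left _ h1))) (Finset.mem_powerset.mp h2)
    · obtain ⟨u, hu, S, hS, rfl⟩ := mem_prod_delta.mp ht
      refine hgoal _ _ ?_ hS
      exact Finset.mem_insert_of_mem (Finset.mem_union_left _
        (Finset.mem_union_right _ (Finset.mem_image.mpr ⟨u, hu, rfl⟩)))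
    · obtain ⟨u, hu, S, hS, rfl⟩ := mem_prod_delta.mp ht
      refine hgoal _ _ ?_ (upd_subset _ hS)
      exact Finset.mem_insert_of_mem (Finset.mem_union_right _
        (Finset.mem_image.mpr ⟨u, hu, rfl⟩))
  calc (statesOf (prodVA A X)).card
      ≤ ((statesOf A ×ˢ X.powerset).image (fun p => enc p.1 p.2)).card :=
        Finset.card_le_card hsub
    _ ≤ (statesOf A ×ˢ X.powerset).card := Finset.card_image_le
    _ = 2 ^ X.card * (statesOf A).card := by
        rw [Finset.card_product, Finset.card_powerset, Nat.mul_comm]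

lemma prod_delta_card (A : VA Sig) (X : Finset ℕ) :
    (prodVA A X).δ.card ≤ 2 ^ X.card * A.δ.card := by
  calc (prodVA A X).δ.card ≤ (A.δ ×ˢ X.powerset).card := Finset.card_image_le
    _ = 2 ^ X.card * A.δ.card := by
        rw [Finset.card_product, Finset.card_powerset, Nat.mul_comm]

end Final

theorem statement3 (A : VA Sig) (X : Finset ℕ)
    (hseq : A.Sequential) (hX : X ⊆ varsOf A) :
    ∃ A' : VA Sig, A'.Sequential ∧ (∀ d : List Sig, vaSem A' d = vaSem A d) ∧
      SemiFunctionalForSet A' X ∧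
      (statesOf A').card ≤ 2 ^ X.card * (statesOf A).card ∧
      A'.δ.card ≤ 2 ^ X.card * A.δ.card := by
  exact ⟨prodVA A X, prod_seq A X hseq, prod_sem A X hseq, prod_semifunc A X,
    prod_states_card A X, prod_delta_card A X⟩

end Spanners
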